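/- If H_v is a supporting hyperplane of the moment cone S_A (with normal vector v such that ⟨v, s_A(x)⟩ ≥ 0 for all x ∈ X), then the intersection S_A ∩ H_v equals the moment cone of the restriction of A to the zero set Z = {x ∈ X : ⟨v, s_A(x)⟩ = 0}, and dim(S_A ∩ H_v) < dim S_A. -/

import Mathlib

open MeasureTheory

/-- If `H_v` is a supporting hyperplane of the moment cone `S_A` (with normal
vector `v` satisfying `⟨v, s_A(x)⟩ ≥ 0` for all `x ∈ X`), then `S_A ∩ H_v` is
the moment cone of the restriction of `A` to the zero set
`Z = {x : ⟨v, s_A(x)⟩ = 0}`, and `dim (S_A ∩ H_v) < dim S_A`. -/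
theorem moment_cone_supporting_hyperplane {X : Type*} [MeasurableSpace X] {m : ℕ}
    (a : Fin m → X → ℝ) (ha : ∀ i, Measurable (a i))
    (hindep : LinearIndependent ℝ a) (v : Fin m → ℝ) (hv : v ≠ 0)
    (hsupp : ∀ x : X, 0 ≤ ∑ i, v i * a i x) :
    let S : Set (Fin m → ℝ) := {s | ∃ μ : Measure X,
      (∀ i, Integrable (a i) μ) ∧ ∀ i, s i = ∫ x, a i x ∂μ}
    let Z : Set X := {x | ∑ i, v i * a i x = 0}
    let SZ : Set (Fin m → ℝ) := {s | ∃ μ : Measure Z,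
      (∀ i, Integrable (fun z : Z => a i z.1) μ) ∧
        ∀ i, s i = ∫ z, a i (z : X) ∂μ}
    S ∩ {s | ∑ i, v i * s i = 0} = SZ ∧
      Module.finrank ℝ (Submodule.span ℝ (S ∩ {s | ∑ i, v i * s i = 0})) <
        Module.finrank ℝ (Submodule.span ℝ S) := by
  intro S Z SZ
  -- measurability of Z
  have hf : Measurable (fun x => ∑ i, v i * a i x) :=
    Finset.measurable_sum _ (fun i _ => ((ha i).const_mul (v i)))
  have hZ : MeasurableSet Z := hf (measurableSet_singleton 0)
  have hemb : MeasurableEmbedding ((↑) : Z → X) := MeasurableEmbedding.subtype_coe hZ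
  have hinter : S ∩ {s | ∑ i, v i * s i = 0} = SZ := by
    ext s
    constructor
    · rintro ⟨⟨μ, hint, hs⟩, h0⟩
      have hfint : Integrable (fun x => ∑ i, v i * a i x) μ :=
        integrable_finset_sum _ (fun i _ => (hint i).const_mul (v i))
      have hI : ∫ x, (∑ i, v i * a i x) ∂μ = 0 := by
        rw [integral_finset_sum _ (fun i _ => (hint i).const_mul (v i))]
        simp only [integral_const_mul]
        have : ∀ i, ∫ x, a i x ∂μ = s i := fun i => (hs i).symm
        simp only [this]
        exact h0
      have hae : (fun x => ∑ i, v i * a i x) =ᵐ[μ] 0 :=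
        ((integral_eq_zero_iff_of_nonneg (fun x => hsupp x) hfint).mp hI)
      have haeZ : ∀ᵐ x ∂μ, x ∈ Z := by
        filter_upwards [hae] with x hx
        exact hx
      have hres : μ.restrict Z = μ := Measure.restrict_eq_self_of_ae_mem haeZ
      refine ⟨μ.comap ((↑) : Z → X), ?_, ?_⟩
      · intro i
        have hmap : (μ.comap ((↑) : Z → X)).map ((↑) : Z → X) = μ := by
          rw [hemb.map_comap, Subtype.range_coe, hres]
        have : Integrable (a i) ((μ.comap ((↑) : Z → X)).map ((↑) : Z → X)) := by
          rw [hmap]; exact hint i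
        exact (hemb.integrable_map_iff).mp this
      · intro i
        have hmap : (μ.comap ((↑) : Z → X)).map ((↑) : Z → X) = μ := by
          rw [hemb.map_comap, Subtype.range_coe, hres]
        calc s i = ∫ x, a i x ∂μ := hs i
          _ = ∫ x, a i x ∂((μ.comap ((↑) : Z → X)).map ((↑) : Z → X)) := by rw [hmap]
          _ = ∫ z, a i (z : X) ∂(μ.comap ((↑) : Z → X)) := hemb.integral_map _
    · rintro ⟨ν, hint, hs⟩
      have hsint : ∀ i, s i = ∫ x, a i x ∂(ν.map ((↑) : Z → X)) := by
        intro i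
        rw [hemb.integral_map]
        exact hs i
      refine ⟨⟨ν.map ((↑) : Z → X), fun i => (hemb.integrable_map_iff).mpr (hint i), hsint⟩, ?_⟩
      show ∑ i, v i * s i = 0
      have : ∀ i, s i = ∫ z, a i (z : X) ∂ν := hs
      calc ∑ i, v i * s i = ∑ i, ∫ z, v i * a i (z : X) ∂ν := by
            simp only [this, integral_const_mul]
        _ = ∫ z, (∑ i, v i * a i (z : X)) ∂ν := by
            rw [integral_finset_sum _ (fun i _ => (hint i).const_mul (v i))]
        _ = ∫ z : Z, (0 : ℝ) ∂ν := by
            congr 1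
            funext z
            exact z.2
        _ = 0 := integral_zero _ _
  refine ⟨hinter, ?_⟩
  -- dimension part
  -- the linear functional
  let φ : (Fin m → ℝ) →ₗ[ℝ] ℝ :=
    { toFun := fun s => ∑ i, v i * s i
      map_add' := by intro s t; simp [mul_add, Finset.sum_add_distrib]
      map_smul' := by
        intro c s
        simp only [smul_eq_mul, RingHom.id_apply, Finset.mul_sum, Pi.smul_apply]
        exact Finset.sum_congr rfl fun i _ => by ring }
  have hφapp : ∀ s, φ s = ∑ i, v i * s i := fun s => rfl
  have hφne : φ ≠ 0 := by
    obtain ⟨j, hj⟩ : ∃ j, v j ≠ 0 := by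
      by_contra h
      push_neg at h
      exact hv (funext h)
    intro h
    have := congrFun (congrArg DFunLike.coe h) (Pi.single j 1)
    simp [hφapp, Pi.single_apply, Finset.sum_ite_eq', mul_comm] at this
    exact hj this
  have hker : LinearMap.ker φ ≠ ⊤ := fun h => hφne (LinearMap.ker_eq_top.mp h)
  -- span S = ⊤ via dirac measures
  have hcurve : ∀ x : X, (fun i => a i x) ∈ S := by
    intro x
    refine ⟨Measure.dirac x, fun i => ?_, fun i => ?_⟩
    · refine ⟨((ha i).stronglyMeasurable).aestronglyMeasurable, ?_⟩
      rw [HasFiniteIntegral, lintegral_dirac' _ (ha i).enorm]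
      exact ENNReal.coe_lt_top
    · rw [integral_dirac' _ _ (ha i).stronglyMeasurable]
  have hspanS : Submodule.span ℝ S = ⊤ := by
    by_contra h
    obtain ⟨f, hfne, hfbot⟩ := Submodule.exists_dual_map_eq_bot_of_lt_top
      (lt_top_iff_ne_top.mpr h) inferInstance
    -- f vanishes on S, in particular on the curve
    have hfS : ∀ s ∈ S, f s = 0 := by
      intro s hs
      have : f s ∈ (Submodule.span ℝ S).map f := ⟨s, Submodule.subset_span hs, rfl⟩
      rw [hfbot] at this
      simpa using this
    -- express f via coordinates
    set u : Fin m → ℝ := fun i => f (Pi.single i 1) with hu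
    have hfrep : ∀ s : Fin m → ℝ, f s = ∑ i, s i * u i := by
      intro s
      have hrep : s = ∑ i, s i • (Pi.single i 1 : Fin m → ℝ) := by
        ext j; simp [Pi.single_apply, Finset.sum_ite_eq']
      calc f s = f (∑ i, s i • (Pi.single i 1 : Fin m → ℝ)) := by rw [← hrep]
        _ = ∑ i, s i * u i := by simp [map_sum, _root_.map_smul, hu, smul_eq_mul]
    have hzero : ∀ x : X, ∑ i, u i * a i x = 0 := by
      intro x
      have := hfS _ (hcurve x)
      rw [hfrep] at this
      calc ∑ i, u i * a i x = ∑ i, a i x * u i := by simp [mul_comm]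
        _ = 0 := this
    have : u = 0 := by
      have hlin := Fintype.linearIndependent_iff.mp hindep u
      funext i
      refine hlin ?_ i
      funext x
      simpa [Finset.sum_apply] using hzero x
    apply hfne
    apply LinearMap.ext
    intro s
    rw [hfrep, this]
    simp
  have hle : Submodule.span ℝ (S ∩ {s | ∑ i, v i * s i = 0}) ≤ LinearMap.ker φ := by
    rw [Submodule.span_le]
    rintro s ⟨-, hs⟩
    simpa [LinearMap.mem_ker, hφapp] using hs
  calc Module.finrank ℝ (Submodule.span ℝ (S ∩ {s | ∑ i, v i * s i = 0}))
      ≤ Module.finrank ℝ (LinearMap.ker φ) := Submodule.finrank_mono hle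
    _ < Module.finrank ℝ (Fin m → ℝ) := Submodule.finrank_lt hker
    _ = Module.finrank ℝ (Submodule.span ℝ S) := by
        rw [hspanS]
        exact (finrank_top ℝ _).symm
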